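/- Let x ∈ (0,π] and p ∈ [2,∞). Let k, k_N : [0,π]² → ℝ (N ∈ ℕ) be bounded measurable kernels and f, f_N ∈ L^p([0,x]). Suppose u, u_N ∈ L^p([0,x]) satisfy u − κ_x u = f and u_N − κ_{x,N} u_N = f_N for each N, that Id − κ_x is boundedly invertible on L^p([0,x]), that f_N → f in L^p([0,x]), that ‖k_N − k‖_{L^p([0,x];L^{p'}([0,x]))} → 0, and that sup_N ‖u_N‖_{L^p([0,x])} < ∞. Then u_N → u in L^p([0,x]) as N → ∞. -/

import Mathlib

open MeasureTheory Filter
open scoped ENNReal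

/-- Convergence of solutions of Fredholm equations: if `u − κ_x u = f`,
`u_N − κ_{x,N} u_N = f_N`, `Id − κ_x` is boundedly invertible on `Lᵖ([0,x])`,
`f_N → f` in `Lᵖ`, `‖k_N − k‖_{Lᵖ(L^{p'})} → 0` and `sup_N ‖u_N‖_p < ∞`,
then `u_N → u` in `Lᵖ([0,x])`. -/
theorem stmt6 (x : ℝ) (hx : x ∈ Set.Ioc (0 : ℝ) Real.pi)
    (p p' : ℝ) (hp2 : 2 ≤ p) (hpp' : Real.HolderConjugate p p')
    (k : ℝ → ℝ → ℝ) (kN : ℕ → ℝ → ℝ → ℝ)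
    (hkmeas : Measurable (Function.uncurry k))
    (hkNmeas : ∀ N, Measurable (Function.uncurry (kN N)))
    (Ck : ℝ) (hkbdd : ∀ t s : ℝ, |k t s| ≤ Ck)
    (CkN : ℕ → ℝ) (hkNbdd : ∀ N, ∀ t s : ℝ, |kN N t s| ≤ CkN N)
    (f u : ℝ → ℝ) (fN uN : ℕ → ℝ → ℝ)
    (hf : MemLp f (ENNReal.ofReal p) (volume.restrict (Set.Icc (0 : ℝ) x)))
    (hu : MemLp u (ENNReal.ofReal p) (volume.restrict (Set.Icc (0 : ℝ) x)))
    (hfN : ∀ N, MemLp (fN N) (ENNReal.ofReal p) (volume.restrict (Set.Icc (0 : ℝ) x)))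
    (huN : ∀ N, MemLp (uN N) (ENNReal.ofReal p) (volume.restrict (Set.Icc (0 : ℝ) x)))
    (hequ : ∀ᵐ t ∂(volume.restrict (Set.Icc (0 : ℝ) x)),
      u t - ∫ s in Set.Icc (0 : ℝ) x, k t s * u s = f t)
    (heqN : ∀ N, ∀ᵐ t ∂(volume.restrict (Set.Icc (0 : ℝ) x)),
      uN N t - ∫ s in Set.Icc (0 : ℝ) x, kN N t s * uN N s = fN N t)
    -- `Id − κ_x` is boundedly invertible on `Lᵖ([0,x])`:
    (hsolve : ∀ g : ℝ → ℝ, MemLp g (ENNReal.ofReal p) (volume.restrict (Set.Icc (0 : ℝ) x)) →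
      ∃ v : ℝ → ℝ, MemLp v (ENNReal.ofReal p) (volume.restrict (Set.Icc (0 : ℝ) x)) ∧
        ∀ᵐ t ∂(volume.restrict (Set.Icc (0 : ℝ) x)),
          v t - ∫ s in Set.Icc (0 : ℝ) x, k t s * v s = g t)
    (R : ℝ)
    (hbound : ∀ v : ℝ → ℝ, MemLp v (ENNReal.ofReal p) (volume.restrict (Set.Icc (0 : ℝ) x)) →
      eLpNorm v (ENNReal.ofReal p) (volume.restrict (Set.Icc (0 : ℝ) x)) ≤
        ENNReal.ofReal R *
          eLpNorm (fun t => v t - ∫ s in Set.Icc (0 : ℝ) x, k t s * v s) (ENNReal.ofReal p)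
            (volume.restrict (Set.Icc (0 : ℝ) x)))
    -- `f_N → f` in `Lᵖ([0,x])`:
    (hfconv : Tendsto (fun N => eLpNorm (fun t => fN N t - f t) (ENNReal.ofReal p)
        (volume.restrict (Set.Icc (0 : ℝ) x))) atTop (nhds 0))
    -- `‖k_N − k‖_{Lᵖ([0,x];L^{p'}([0,x]))} → 0`:
    (hkconv : Tendsto (fun N => (∫ t in Set.Icc (0 : ℝ) x,
        (∫ s in Set.Icc (0 : ℝ) x, |kN N t s - k t s| ^ p') ^ (p / p')) ^ (1 / p))
      atTop (nhds 0))
    -- `sup_N ‖u_N‖_p < ∞`: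
    (Cu : ℝ) (huNbdd : ∀ N, eLpNorm (uN N) (ENNReal.ofReal p)
      (volume.restrict (Set.Icc (0 : ℝ) x)) ≤ ENNReal.ofReal Cu) :
    Tendsto (fun N => eLpNorm (fun t => uN N t - u t) (ENNReal.ofReal p)
      (volume.restrict (Set.Icc (0 : ℝ) x))) atTop (nhds 0) := by
    classical
  set μ := volume.restrict (Set.Icc (0 : ℝ) x) with hμ
  haveI hμfin : IsFiniteMeasure μ := by
    constructor
    rw [hμ, Measure.restrict_apply_univ]
    exact measure_Icc_lt_top
  have hp0 : (0 : ℝ) < p := lt_of_lt_of_le (by norm_num) hp2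
  have hp'0 : (0 : ℝ) < p' := hpp'.symm.pos
  have hP0 : (ENNReal.ofReal p) ≠ 0 := by
    simp only [ne_eq, ENNReal.ofReal_eq_zero, not_le]; exact hp0
  have hPtop : (ENNReal.ofReal p) ≠ ⊤ := ENNReal.ofReal_ne_top
  have hP1 : 1 ≤ ENNReal.ofReal p := by
    rw [← ENNReal.ofReal_one]
    exact ENNReal.ofReal_le_ofReal (by linarith)
  have hPtoReal : (ENNReal.ofReal p).toReal = p := ENNReal.toReal_ofReal hp0.le
  have hCk0 : (0 : ℝ) ≤ Ck := le_trans (abs_nonneg _) (hkbdd 0 0)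
  have hCkN0 : ∀ N, (0 : ℝ) ≤ CkN N := fun N => le_trans (abs_nonneg _) (hkNbdd N 0 0)
  have huI : Integrable u μ := hu.integrable hP1
  have huNI : ∀ N, Integrable (uN N) μ := fun N => (huN N).integrable hP1
  -- integrability of the kernel-products
  have hkuI : ∀ t, Integrable (fun s => k t s * u s) μ := fun t =>
    huI.bdd_mul (hkmeas.of_uncurry_left).aestronglyMeasurable
      (c := Ck) (ae_of_all _ fun s => by simpa [Real.norm_eq_abs] using hkbdd t s)
  have hkuNI : ∀ N t, Integrable (fun s => k t s * uN N s) μ := fun N t =>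
    (huNI N).bdd_mul (hkmeas.of_uncurry_left).aestronglyMeasurable
      (c := Ck) (ae_of_all _ fun s => by simpa [Real.norm_eq_abs] using hkbdd t s)
  have hkNuNI : ∀ N t, Integrable (fun s => kN N t s * uN N s) μ := fun N t =>
    (huNI N).bdd_mul ((hkNmeas N).of_uncurry_left).aestronglyMeasurable
      (c := CkN N) (ae_of_all _ fun s => by simpa [Real.norm_eq_abs] using hkNbdd N t s)
  -- the error term
  set g : ℕ → ℝ → ℝ := fun N t => ∫ s in Set.Icc (0 : ℝ) x, (kN N t s - k t s) * uN N s
    with hg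
  have hgmeas : ∀ N, AEStronglyMeasurable (g N) μ := by
    intro N
    have h1 : AEStronglyMeasurable
        (fun z : ℝ × ℝ => (kN N z.1 z.2 - k z.1 z.2) * uN N z.2) (μ.prod μ) := by
      exact (((hkNmeas N).sub hkmeas).aestronglyMeasurable.mul ((huN N).1.comp_quasiMeasurePreserving Measure.quasiMeasurePreserving_snd))
    exact h1.integral_prod_right'
  -- the quantity in `hkconv`
  set ε : ℕ → ℝ := fun N => (∫ t in Set.Icc (0 : ℝ) x,
      (∫ s in Set.Icc (0 : ℝ) x, |kN N t s - k t s| ^ p') ^ (p / p')) ^ (1 / p) with hε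
  -- the `L^{p'}`-norm in `s` of the kernel difference
  set A : ℕ → ℝ → ℝ := fun N t =>
      (∫ s in Set.Icc (0 : ℝ) x, |kN N t s - k t s| ^ p') ^ (1 / p') with hA
  have hIinner_nonneg : ∀ N t, 0 ≤ ∫ s in Set.Icc (0 : ℝ) x, |kN N t s - k t s| ^ p' :=
    fun N t => integral_nonneg fun s => Real.rpow_nonneg (abs_nonneg _) _
  have hAnonneg : ∀ N t, 0 ≤ A N t := fun N t =>
    Real.rpow_nonneg (hIinner_nonneg N t) _
  have hdkbdd : ∀ N t s, |kN N t s - k t s| ≤ CkN N + Ck := by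
    intro N t s
    calc |kN N t s - k t s| ≤ |kN N t s| + |k t s| := abs_sub _ _
      _ ≤ CkN N + Ck := add_le_add (hkNbdd N t s) (hkbdd t s)
  have hdkmemp' : ∀ N t, MemLp (fun s => kN N t s - k t s) (ENNReal.ofReal p') μ := by
    intro N t
    exact MemLp.of_bound
      (((hkNmeas N).of_uncurry_left.sub hkmeas.of_uncurry_left).aestronglyMeasurable)
      (CkN N + Ck) (ae_of_all _ fun s => by
        simpa [Real.norm_eq_abs] using hdkbdd N t s)
  -- `A N` is measurable and bounded, hence in `L^p`
  have hAmemp : ∀ N, MemLp (A N) (ENNReal.ofReal p) μ := by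
    intro N
    have hm : Measurable fun z : ℝ × ℝ => |kN N z.1 z.2 - k z.1 z.2| ^ p' :=
      (((hkNmeas N).sub hkmeas).abs).pow_const p'
    have hmA : StronglyMeasurable (fun t => ∫ s in Set.Icc (0 : ℝ) x,
        |kN N t s - k t s| ^ p') := hm.stronglyMeasurable.integral_prod_right'
    have hmeasA : AEStronglyMeasurable (A N) μ :=
      (hmA.measurable.pow_const (1 / p')).aestronglyMeasurable
    have hIbd : ∀ t, (∫ s in Set.Icc (0 : ℝ) x, |kN N t s - k t s| ^ p')
        ≤ (μ Set.univ).toReal * ((CkN N + Ck) ^ p') := by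
      intro t
      have hint : Integrable (fun s => |kN N t s - k t s| ^ p') μ := by
        refine (MemLp.of_bound (p := 1)
          ((((hkNmeas N).of_uncurry_left.sub hkmeas.of_uncurry_left).abs.pow_const
            p').aestronglyMeasurable) ((CkN N + Ck) ^ p') (ae_of_all _ fun s => ?_)).integrable
          le_rfl
        rw [Real.norm_eq_abs, abs_of_nonneg (Real.rpow_nonneg (abs_nonneg _) _)]
        exact Real.rpow_le_rpow (abs_nonneg _) (hdkbdd N t s) hp'0.le
      calc (∫ s in Set.Icc (0 : ℝ) x, |kN N t s - k t s| ^ p')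
          ≤ ∫ _ in Set.Icc (0 : ℝ) x, (CkN N + Ck) ^ p' := by
            refine integral_mono hint (integrable_const _) fun s => ?_
            exact Real.rpow_le_rpow (abs_nonneg _) (hdkbdd N t s) hp'0.le
        _ = (μ Set.univ).toReal * ((CkN N + Ck) ^ p') := by
            rw [← hμ, integral_const, smul_eq_mul]; rfl
    refine MemLp.of_bound hmeasA
      (((μ Set.univ).toReal * ((CkN N + Ck) ^ p')) ^ (1 / p')) (ae_of_all _ fun t => ?_)
    rw [Real.norm_eq_abs, abs_of_nonneg (hAnonneg N t)]
    exact Real.rpow_le_rpow (hIinner_nonneg N t) (hIbd t) (by positivity)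
  -- `eLpNorm (A N) = ofReal (ε N)`
  have hAeLp : ∀ N, eLpNorm (A N) (ENNReal.ofReal p) μ = ENNReal.ofReal (ε N) := by
    intro N
    rw [(hAmemp N).eLpNorm_eq_integral_rpow_norm hP0 hPtop, hPtoReal]
    congr 1
    have hpt : ∀ t, ‖A N t‖ ^ p
        = (∫ s in Set.Icc (0 : ℝ) x, |kN N t s - k t s| ^ p') ^ (p / p') := by
      intro t
      rw [Real.norm_eq_abs, abs_of_nonneg (hAnonneg N t), hA]
      rw [← Real.rpow_mul (hIinner_nonneg N t), one_div, inv_mul_eq_div]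
    rw [hε]
    simp only [one_div]
    congr 1
    exact integral_congr_ae (ae_of_all _ hpt)
  -- Hölder: pointwise bound for the error term
  have hBnn : ∀ N, 0 ≤ (∫ a, ‖uN N a‖ ^ p ∂μ) ^ (1 / p) :=
    fun N => Real.rpow_nonneg (integral_nonneg fun a => Real.rpow_nonneg (norm_nonneg _) _) _
  have hgpt : ∀ N t, ‖g N t‖ ≤ A N t * (∫ a, ‖uN N a‖ ^ p ∂μ) ^ (1 / p) := by
    intro N t
    have hH := integral_mul_norm_le_Lp_mul_Lq (μ := μ) hpp'.symm (hdkmemp' N t) (huN N)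
    calc ‖g N t‖ ≤ ∫ s in Set.Icc (0 : ℝ) x, ‖(kN N t s - k t s) * uN N s‖ :=
          norm_integral_le_integral_norm _
      _ = ∫ s, ‖kN N t s - k t s‖ * ‖uN N s‖ ∂μ := by
          rw [← hμ]; exact integral_congr_ae (ae_of_all _ fun s => norm_mul _ _)
      _ ≤ (∫ s, ‖kN N t s - k t s‖ ^ p' ∂μ) ^ (1 / p') * (∫ a, ‖uN N a‖ ^ p ∂μ) ^ (1 / p) := hH
      _ = A N t * (∫ a, ‖uN N a‖ ^ p ∂μ) ^ (1 / p) := by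
          simp only [hA, Real.norm_eq_abs, hμ]
  -- `ofReal` of that `L^p` norm is `eLpNorm (uN N)`
  have hBeq : ∀ N, ENNReal.ofReal ((∫ a, ‖uN N a‖ ^ p ∂μ) ^ (1 / p))
      = eLpNorm (uN N) (ENNReal.ofReal p) μ := by
    intro N
    rw [(huN N).eLpNorm_eq_integral_rpow_norm hP0 hPtop, hPtoReal, one_div]
  -- bound for the `L^p` norm of the error term
  have hgbound : ∀ N, eLpNorm (g N) (ENNReal.ofReal p) μ
      ≤ ENNReal.ofReal Cu * ENNReal.ofReal (ε N) := by
    intro N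
    set B : ℝ := (∫ a, ‖uN N a‖ ^ p ∂μ) ^ (1 / p) with hB
    have h1 : eLpNorm (g N) (ENNReal.ofReal p) μ
        ≤ eLpNorm (fun t => A N t * B) (ENNReal.ofReal p) μ := by
      refine eLpNorm_mono_real fun t => ?_
      exact hgpt N t
    have h2 : (fun t => A N t * B) = B • (A N) := by
      funext t; simp [smul_eq_mul, mul_comm]
    have h3 : eLpNorm (fun t => A N t * B) (ENNReal.ofReal p) μ
        = (‖B‖₊ : ℝ≥0∞) * eLpNorm (A N) (ENNReal.ofReal p) μ := by
      rw [h2, eLpNorm_const_smul]; rfl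
    have h4 : (‖B‖₊ : ℝ≥0∞) = eLpNorm (uN N) (ENNReal.ofReal p) μ := by
      rw [show (‖B‖₊ : ℝ≥0∞) = ‖B‖ₑ from rfl, Real.enorm_eq_ofReal (hBnn N)]; exact hBeq N
    calc eLpNorm (g N) (ENNReal.ofReal p) μ
        ≤ (‖B‖₊ : ℝ≥0∞) * eLpNorm (A N) (ENNReal.ofReal p) μ := h1.trans_eq h3
      _ = eLpNorm (uN N) (ENNReal.ofReal p) μ * ENNReal.ofReal (ε N) := by
          rw [h4, hAeLp N]
      _ ≤ ENNReal.ofReal Cu * ENNReal.ofReal (ε N) :=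
          mul_le_mul_left (huNbdd N) _
  -- the main estimate
  have hmain : ∀ N, eLpNorm (fun t => uN N t - u t) (ENNReal.ofReal p) μ
      ≤ ENNReal.ofReal R * (eLpNorm (fun t => fN N t - f t) (ENNReal.ofReal p) μ
        + ENNReal.ofReal Cu * ENNReal.ofReal (ε N)) := by
    intro N
    have hwmem : MemLp (fun t => uN N t - u t) (ENNReal.ofReal p) μ := (huN N).sub hu
    have hae : (fun t => (uN N t - u t)
        - ∫ s in Set.Icc (0 : ℝ) x, k t s * (uN N s - u s))
        =ᵐ[μ] (fun t => (fN N t - f t) + g N t) := by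
      filter_upwards [hequ, heqN N] with t h1 h2
      have e1 : (∫ s in Set.Icc (0 : ℝ) x, k t s * (uN N s - u s))
          = (∫ s in Set.Icc (0 : ℝ) x, k t s * uN N s)
            - ∫ s in Set.Icc (0 : ℝ) x, k t s * u s := by
        rw [← hμ, ← integral_sub (hkuNI N t) (hkuI t)]
        exact integral_congr_ae (ae_of_all _ fun s => by ring)
      have e2 : g N t = (∫ s in Set.Icc (0 : ℝ) x, kN N t s * uN N s)
            - ∫ s in Set.Icc (0 : ℝ) x, k t s * uN N s := by
        rw [hg]
        rw [← hμ, ← integral_sub (hkNuNI N t) (hkuNI N t)]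
        exact integral_congr_ae (ae_of_all _ fun s => by ring)
      rw [e1, e2]
      linarith
    have hb := hbound (fun t => uN N t - u t) hwmem
    calc eLpNorm (fun t => uN N t - u t) (ENNReal.ofReal p) μ
        ≤ ENNReal.ofReal R * eLpNorm (fun t => (uN N t - u t)
            - ∫ s in Set.Icc (0 : ℝ) x, k t s * (uN N s - u s)) (ENNReal.ofReal p) μ := hb
      _ = ENNReal.ofReal R * eLpNorm (fun t => (fN N t - f t) + g N t)
            (ENNReal.ofReal p) μ := by rw [eLpNorm_congr_ae hae]
      _ ≤ ENNReal.ofReal R * (eLpNorm (fun t => fN N t - f t) (ENNReal.ofReal p) μ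
            + eLpNorm (g N) (ENNReal.ofReal p) μ) := by
          refine mul_le_mul_right ?_ _
          exact eLpNorm_add_le ((hfN N).1.sub hf.1) (hgmeas N) hP1
      _ ≤ ENNReal.ofReal R * (eLpNorm (fun t => fN N t - f t) (ENNReal.ofReal p) μ
            + ENNReal.ofReal Cu * ENNReal.ofReal (ε N)) := by
          exact mul_le_mul_right (add_le_add le_rfl (hgbound N)) _
  -- convergence of the right-hand side to zero
  have hεconv : Tendsto (fun N => ENNReal.ofReal (ε N)) atTop (nhds 0) := by
    simpa using ENNReal.tendsto_ofReal hkconv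
  have hrhs : Tendsto (fun N => ENNReal.ofReal R
      * (eLpNorm (fun t => fN N t - f t) (ENNReal.ofReal p) μ
        + ENNReal.ofReal Cu * ENNReal.ofReal (ε N))) atTop (nhds 0) := by
    have h1 : Tendsto (fun N => ENNReal.ofReal Cu * ENNReal.ofReal (ε N)) atTop (nhds 0) := by
      have := ENNReal.Tendsto.const_mul (a := ENNReal.ofReal Cu) hεconv
        (Or.inr ENNReal.ofReal_ne_top)
      simpa using this
    have h2 : Tendsto (fun N => eLpNorm (fun t => fN N t - f t) (ENNReal.ofReal p) μ
        + ENNReal.ofReal Cu * ENNReal.ofReal (ε N)) atTop (nhds 0) := by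
      have := Tendsto.add hfconv h1
      simpa using this
    have := ENNReal.Tendsto.const_mul (a := ENNReal.ofReal R) h2
      (Or.inr ENNReal.ofReal_ne_top)
    simpa using this
  exact tendsto_of_tendsto_of_tendsto_of_le_of_le tendsto_const_nhds hrhs
    (fun N => zero_le) hmain
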